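/- Let q be a prime power, ψ the canonical additive character of F_q, and X, Y ⊆ F_q finite sets. Then |Σ_{x∈X} Σ_{y∈Y} ψ(xy)|⁸ ≤ q · |X|⁴ · |Y|⁴ · E(X) · E(Y), where E denotes additive energy. -/

import Mathlib

open Finset

/-- The canonical additive character `ψ(x) = e^{2πi Tr(x)/p}` of a finite
field `F` of characteristic `p`. -/
noncomputable def canonChar (p : ℕ) (F : Type*) [Field F] [Fintype F]
    [Algebra (ZMod p) F] (x : F) : ℂ :=
  Complex.exp (2 * Real.pi * Complex.I *
    ((Algebra.trace (ZMod p) F x).val : ℂ) / p)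

/-- Additive energy of a finite subset of `F`. -/
def addEnergy {F : Type*} [AddCommGroup F] [DecidableEq F] (Z : Finset F) : ℕ :=
  (((Z ×ˢ Z) ×ˢ (Z ×ˢ Z)).filter (fun z => z.1.1 + z.2.1 = z.1.2 + z.2.2)).card

set_option linter.unusedSectionVars false
set_option maxHeartbeats 1000000

/-- Number of representations of `d` as a difference of two elements of `Z`. -/
def rep {F : Type*} [AddCommGroup F] [DecidableEq F] (Z : Finset F) (d : F) : ℕ :=
  ((Z ×ˢ Z).filter (fun w => w.1 - w.2 = d)).card

section CharBasics
variable (p : ℕ) [hpf : Fact p.Prime] (F : Type*) [Field F] [Fintype F] [Algebra (ZMod p) F]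

private lemma exp_mod (m : ℕ) :
    Complex.exp (2 * Real.pi * Complex.I * ((m % p : ℕ) : ℂ) / p)
      = Complex.exp (2 * Real.pi * Complex.I * (m : ℂ) / p) := by
  have hp0 : (p : ℂ) ≠ 0 := by
    exact_mod_cast hpf.out.ne_zero
  have hm : (m : ℂ) = ((m % p : ℕ) : ℂ) + p * ((m / p : ℕ) : ℂ) := by
    conv_lhs => rw [← Nat.mod_add_div m p]
    push_cast
    ring
  rw [hm]
  have : 2 * Real.pi * Complex.I * (((m % p : ℕ) : ℂ) + p * ((m / p : ℕ) : ℂ)) / p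
      = 2 * Real.pi * Complex.I * ((m % p : ℕ) : ℂ) / p
        + (((m / p : ℕ) : ℤ) : ℂ) * (2 * Real.pi * Complex.I) := by
    have : (((m / p : ℕ) : ℤ) : ℂ) = ((m / p : ℕ) : ℂ) := by norm_cast
    rw [this]
    field_simp
  rw [this, Complex.exp_add, Complex.exp_int_mul_two_pi_mul_I, mul_one]

lemma canonChar_add (a b : F) :
    canonChar p F (a + b) = canonChar p F a * canonChar p F b := by
  unfold canonChar
  rw [← Complex.exp_add, map_add]
  set u := Algebra.trace (ZMod p) F a
  set v := Algebra.trace (ZMod p) F b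
  have : (u + v).val = (u.val + v.val) % p := by
    rw [ZMod.val_add]
  rw [this, exp_mod]
  have hp0 : (p : ℂ) ≠ 0 := by exact_mod_cast hpf.out.ne_zero
  push_cast
  field_simp

lemma canonChar_zero : canonChar p F 0 = 1 := by
  unfold canonChar
  simp

lemma abs_canonChar (a : F) : ‖canonChar p F a‖ = 1 := by
  unfold canonChar
  have : 2 * Real.pi * Complex.I * ((Algebra.trace (ZMod p) F a).val : ℂ) / p
      = ((2 * Real.pi * ((Algebra.trace (ZMod p) F a).val : ℝ) / p : ℝ) : ℂ) * Complex.I := by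
    push_cast
    ring
  rw [this, Complex.norm_exp_ofReal_mul_I]

lemma conj_canonChar (a : F) :
    (starRingEnd ℂ) (canonChar p F a) = canonChar p F (-a) := by
  have h1 : canonChar p F a * canonChar p F (-a) = 1 := by
    rw [← canonChar_add, add_neg_cancel, canonChar_zero]
  have h2 : (starRingEnd ℂ) (canonChar p F a) = (canonChar p F a)⁻¹ := by
    rw [Complex.inv_def, Complex.normSq_eq_norm_sq, abs_canonChar]
    simp
  rw [h2, inv_eq_of_mul_eq_one_right h1]

lemma canonChar_ne_one_of_trace_ne_zero {a : F} (ha : Algebra.trace (ZMod p) F a ≠ 0) :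
    canonChar p F a ≠ 1 := by
  unfold canonChar
  set v : ℕ := (Algebra.trace (ZMod p) F a).val with hv
  have hvpos : 0 < v := by
    rcases Nat.eq_zero_or_pos v with h | h
    · exact absurd ((ZMod.val_eq_zero _).mp h) ha
    · exact h
  have hvlt : v < p := ZMod.val_lt _
  intro h
  rw [Complex.exp_eq_one_iff] at h
  obtain ⟨n, hn⟩ := h
  have hp0 : (p : ℂ) ≠ 0 := by exact_mod_cast hpf.out.ne_zero
  have h2 : (2 * (Real.pi : ℂ) * Complex.I) ≠ 0 := by
    simp [Real.pi_ne_zero, Complex.I_ne_zero]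
  have hvn : (v : ℂ) = (n : ℂ) * p := by
    have hn' : 2 * (Real.pi : ℂ) * Complex.I * (v : ℂ)
        = 2 * (Real.pi : ℂ) * Complex.I * ((n : ℂ) * p) := by
      field_simp at hn
      linear_combination (2 * (Real.pi : ℂ) * Complex.I) * hn
    exact mul_left_cancel₀ h2 hn'
  have hZ : (v : ℤ) = n * p := by exact_mod_cast hvn
  have hp' : (0 : ℤ) < p := by exact_mod_cast hpf.out.pos
  have hv' : (0 : ℤ) < v := by exact_mod_cast hvpos
  have hn0 : 0 < n := by nlinarith
  have hn1 : 1 ≤ n := hn0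
  have : (p : ℤ) ≤ v := by nlinarith
  have hvlt' : (v : ℤ) < p := by exact_mod_cast hvlt
  omega

lemma exists_canonChar_ne_one : ∃ a : F, canonChar p F a ≠ 1 := by
  have : Module.Finite (ZMod p) F := Module.Finite.of_finite
  have htr := Algebra.trace_ne_zero (ZMod p) F
  have hex : ∃ a : F, Algebra.trace (ZMod p) F a ≠ 0 := by
    by_contra hc
    push_neg at hc
    exact htr (LinearMap.ext fun a => hc a)
  obtain ⟨a, ha⟩ := hex
  exact ⟨a, canonChar_ne_one_of_trace_ne_zero p F ha⟩

lemma sum_canonChar [DecidableEq F] (s : F) :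
    ∑ d : F, canonChar p F (s * d) = if s = 0 then (Fintype.card F : ℂ) else 0 := by
  rcases eq_or_ne s 0 with rfl | hs
  · simp only [if_pos rfl, zero_mul, canonChar_zero]
    simp [Finset.card_univ]
  · rw [if_neg hs]
    have hbij : ∑ d : F, canonChar p F (s * d) = ∑ t : F, canonChar p F t :=
      Fintype.sum_bijective (fun d => s * d) ((Equiv.mulLeft₀ s hs).bijective) _ _ (fun d => rfl)
    rw [hbij]
    obtain ⟨a, ha⟩ := exists_canonChar_ne_one p F
    have hshift : canonChar p F a * ∑ t : F, canonChar p F t = ∑ t : F, canonChar p F t := by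
      rw [Finset.mul_sum]
      simp_rw [← canonChar_add p F a]
      exact Fintype.sum_equiv (Equiv.addLeft a) _ _ (fun t => rfl)
    have hz : (canonChar p F a - 1) * (∑ t : F, canonChar p F t) = 0 := by
      linear_combination hshift
    rcases mul_eq_zero.mp hz with h | h
    · exact absurd (by linear_combination h) ha
    · exact h

end CharBasics

section Comb
variable {F : Type*} [Field F] [Fintype F] [DecidableEq F]

lemma fiber_card (Z : Finset F) (d : F) :
    (((Z ×ˢ Z) ×ˢ (Z ×ˢ Z)).filter
      (fun z => (z.1.1 + z.2.1 = z.1.2 + z.2.2) ∧ z.1.1 - z.1.2 = d)).card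
      = rep Z d * rep Z d := by
  rw [rep, ← Finset.card_product]
  refine Finset.card_bij' (fun z _ => (z.1, (z.2.2, z.2.1))) (fun w _ => (w.1, (w.2.2, w.2.1)))
    ?_ ?_ ?_ ?_
  · intro z hz
    simp only [Finset.mem_filter, Finset.mem_product] at hz ⊢
    obtain ⟨⟨⟨h1, h2⟩, h3, h4⟩, h5, h6⟩ := hz
    exact ⟨⟨⟨h1, h2⟩, h6⟩, ⟨h4, h3⟩, by linear_combination h6 - h5⟩
  · intro w hw
    simp only [Finset.mem_filter, Finset.mem_product] at hw ⊢
    obtain ⟨⟨⟨h1, h2⟩, h3⟩, ⟨h4, h5⟩, h6⟩ := hw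
    exact ⟨⟨⟨h1, h2⟩, h5, h4⟩, by linear_combination h3 - h6, h3⟩
  · intro z hz; rfl
  · intro w hw; rfl

lemma sum_rep_sq (Z : Finset F) : ∑ d : F, rep Z d * rep Z d = _root_.addEnergy Z := by
  rw [_root_.addEnergy,
    Finset.card_eq_sum_card_fiberwise
      (f := fun z => z.1.1 - z.1.2) (t := Finset.univ) (fun x _ => Finset.mem_univ _)]
  refine Finset.sum_congr rfl fun d _ => ?_
  rw [Finset.filter_filter, fiber_card]

variable (ψ : F → ℂ)

lemma normsq_expand (hadd : ∀ a b, ψ (a + b) = ψ a * ψ b)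
    (hconj : ∀ a, (starRingEnd ℂ) (ψ a) = ψ (-a)) (Z : Finset F) (d : F) :
    (∑ z ∈ Z, ψ (z * d)) * (starRingEnd ℂ) (∑ z ∈ Z, ψ (z * d))
      = ∑ w ∈ Z ×ˢ Z, ψ ((w.1 - w.2) * d) := by
  rw [map_sum, Finset.sum_mul_sum, Finset.sum_product]
  refine Finset.sum_congr rfl fun z1 _ => Finset.sum_congr rfl fun z2 _ => ?_
  rw [hconj, ← hadd]
  congr 1
  ring

lemma fourth_moment (hadd : ∀ a b, ψ (a + b) = ψ a * ψ b)
    (hconj : ∀ a, (starRingEnd ℂ) (ψ a) = ψ (-a))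
    (horth : ∀ s : F, ∑ d : F, ψ (s * d) = if s = 0 then (Fintype.card F : ℂ) else 0)
    (Z : Finset F) :
    ∑ d : F, ((∑ z ∈ Z, ψ (z * d)) * (starRingEnd ℂ) (∑ z ∈ Z, ψ (z * d))) ^ 2
      = (Fintype.card F : ℂ) * (_root_.addEnergy Z : ℂ) := by
  have key : ∀ d : F,
      ((∑ z ∈ Z, ψ (z * d)) * (starRingEnd ℂ) (∑ z ∈ Z, ψ (z * d))) ^ 2
        = ∑ u ∈ (Z ×ˢ Z) ×ˢ (Z ×ˢ Z), ψ (((u.1.1 - u.1.2) + (u.2.1 - u.2.2)) * d) := by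
    intro d
    rw [normsq_expand ψ hadd hconj, sq, Finset.sum_mul_sum (Z ×ˢ Z) (Z ×ˢ Z)
      (fun w => ψ ((w.1 - w.2) * d)) (fun w => ψ ((w.1 - w.2) * d))]
    conv_rhs => rw [Finset.sum_product]
    refine Finset.sum_congr rfl fun w _ => Finset.sum_congr rfl fun w' _ => ?_
    rw [← hadd]
    congr 1
    ring
  simp_rw [key]
  rw [Finset.sum_comm]
  have : ∀ u ∈ (Z ×ˢ Z) ×ˢ (Z ×ˢ Z),
      ∑ d : F, ψ (((u.1.1 - u.1.2) + (u.2.1 - u.2.2)) * d)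
        = if u.1.1 + u.2.1 = u.1.2 + u.2.2 then (Fintype.card F : ℂ) else 0 := by
    intro u _
    rw [horth]
    congr 1
    exact propext ⟨fun h => by linear_combination h, fun h => by linear_combination h⟩
  rw [Finset.sum_congr rfl this, Finset.sum_ite, Finset.sum_const, Finset.sum_const_zero,
    add_zero, _root_.addEnergy]
  simp [mul_comm]

end Comb

theorem bilinear_char_sum_eighth_power
    (p : ℕ) (hp : p.Prime) (F : Type*) [Field F] [Fintype F]
    [Algebra (ZMod p) F] [DecidableEq F] (X Y : Finset F) :
    ‖∑ x ∈ X, ∑ y ∈ Y, canonChar p F (x * y)‖ ^ 8 ≤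
      (Fintype.card F : ℝ) * (X.card : ℝ) ^ 4 * (Y.card : ℝ) ^ 4 *
        (addEnergy X : ℝ) * (addEnergy Y : ℝ) := by
  haveI : Fact p.Prime := ⟨hp⟩
  have hadd := canonChar_add p F
  have hconj := conj_canonChar p F
  have horth := sum_canonChar p F
  set ψ : F → ℂ := canonChar p F with hψ
  -- fourth moment, real form
  have h4 : ∀ Z : Finset F, ∑ d : F, ‖∑ z ∈ Z, ψ (z * d)‖ ^ 4
      = (Fintype.card F : ℝ) * (_root_.addEnergy Z : ℝ) := by
    intro Z
    have hC := fourth_moment ψ hadd hconj horth Z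
    apply Complex.ofReal_injective
    push_cast
    rw [← hC]
    refine Finset.sum_congr rfl fun d _ => ?_
    rw [Complex.mul_conj, Complex.normSq_eq_norm_sq]
    push_cast
    ring
  -- per-term squared modulus expansions
  have hsq : ∀ (Z : Finset F) (d : F),
      ((‖∑ z ∈ Z, ψ (z * d)‖ : ℝ) : ℂ) ^ 2
        = ∑ w ∈ Z ×ˢ Z, ψ ((w.1 - w.2) * d) := by
    intro Z d
    rw [← normsq_expand ψ hadd hconj Z d, Complex.mul_conj, Complex.normSq_eq_norm_sq]
    push_cast
    ring
  -- step 2 : complex identity for A1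
  have hA1C : ((∑ x ∈ X, ‖∑ y ∈ Y, ψ (y * x)‖ ^ 2 : ℝ) : ℂ)
      = ∑ w ∈ Y ×ˢ Y, ∑ x ∈ X, ψ (x * (w.1 - w.2)) := by
    push_cast
    rw [Finset.sum_congr rfl (fun x (_ : x ∈ X) => hsq Y x), Finset.sum_comm]
    exact Finset.sum_congr rfl fun w _ => Finset.sum_congr rfl fun x _ => by rw [mul_comm]
  have hA1nonneg : (0:ℝ) ≤ ∑ x ∈ X, ‖∑ y ∈ Y, ψ (y * x)‖ ^ 2 :=
    Finset.sum_nonneg fun x _ => by positivity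
  -- A1 ≤ A2
  have hA1le : (∑ x ∈ X, ‖∑ y ∈ Y, ψ (y * x)‖ ^ 2)
      ≤ ∑ w ∈ Y ×ˢ Y, ‖∑ x ∈ X, ψ (x * (w.1 - w.2))‖ := by
    calc (∑ x ∈ X, ‖∑ y ∈ Y, ψ (y * x)‖ ^ 2)
        = ‖((∑ x ∈ X, ‖∑ y ∈ Y, ψ (y * x)‖ ^ 2 : ℝ) : ℂ)‖ := by
          rw [Complex.norm_real, Real.norm_eq_abs, abs_of_nonneg hA1nonneg]
      _ = ‖∑ w ∈ Y ×ˢ Y, ∑ x ∈ X, ψ (x * (w.1 - w.2))‖ := by rw [hA1C]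
      _ ≤ ∑ w ∈ Y ×ˢ Y, ‖∑ x ∈ X, ψ (x * (w.1 - w.2))‖ :=
          norm_sum_le _ _
  -- swap identity
  have hswap : ∑ w ∈ Y ×ˢ Y, ‖∑ x ∈ X, ψ (x * (w.1 - w.2))‖ ^ 2
      = ∑ v ∈ X ×ˢ X, ‖∑ y ∈ Y, ψ (y * (v.1 - v.2))‖ ^ 2 := by
    apply Complex.ofReal_injective
    push_cast
    rw [Finset.sum_congr rfl (fun w (_ : w ∈ Y ×ˢ Y) => hsq X (w.1 - w.2)),
      Finset.sum_congr rfl (fun v (_ : v ∈ X ×ˢ X) => hsq Y (v.1 - v.2)), Finset.sum_comm]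
    exact Finset.sum_congr rfl fun v _ => Finset.sum_congr rfl fun w _ => by rw [mul_comm]
  -- fiberwise decomposition
  have hfib : ∑ v ∈ X ×ˢ X, ‖∑ y ∈ Y, ψ (y * (v.1 - v.2))‖ ^ 2
      = ∑ d : F, (rep X d : ℝ) * ‖∑ y ∈ Y, ψ (y * d)‖ ^ 2 := by
    rw [← Finset.sum_fiberwise_of_maps_to (g := fun v : F × F => v.1 - v.2)
      (t := Finset.univ) (fun v _ => Finset.mem_univ _)
      (fun v => ‖∑ y ∈ Y, ψ (y * (v.1 - v.2))‖ ^ 2)]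
    refine Finset.sum_congr rfl fun d _ => ?_
    rw [Finset.sum_congr rfl (fun v hv => by
      rw [(Finset.mem_filter.mp hv).2] :
        ∀ v ∈ (X ×ˢ X).filter (fun v => v.1 - v.2 = d),
          ‖∑ y ∈ Y, ψ (y * (v.1 - v.2))‖ ^ 2
            = ‖∑ y ∈ Y, ψ (y * d)‖ ^ 2),
      Finset.sum_const, rep, nsmul_eq_mul]
  -- Cauchy–Schwarz no. 3
  have hCS3 : (∑ d : F, (rep X d : ℝ) * ‖∑ y ∈ Y, ψ (y * d)‖ ^ 2) ^ 2
      ≤ (_root_.addEnergy X : ℝ) * ((Fintype.card F : ℝ) * (_root_.addEnergy Y : ℝ)) := by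
    calc (∑ d : F, (rep X d : ℝ) * ‖∑ y ∈ Y, ψ (y * d)‖ ^ 2) ^ 2
        ≤ (∑ d : F, (rep X d : ℝ) ^ 2)
            * ∑ d : F, (‖∑ y ∈ Y, ψ (y * d)‖ ^ 2) ^ 2 :=
          Finset.sum_mul_sq_le_sq_mul_sq _ _ _
      _ = (_root_.addEnergy X : ℝ) * ((Fintype.card F : ℝ) * (_root_.addEnergy Y : ℝ)) := by
          congr 1
          · rw [← sum_rep_sq X]
            push_cast
            exact Finset.sum_congr rfl fun d _ => by ring
          · rw [← h4 Y]
            exact Finset.sum_congr rfl fun d _ => by ring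
  -- Cauchy–Schwarz no. 1
  have hSrw : (∑ x ∈ X, ∑ y ∈ Y, ψ (x * y)) = ∑ x ∈ X, ∑ y ∈ Y, ψ (y * x) :=
    Finset.sum_congr rfl fun x _ => Finset.sum_congr rfl fun y _ => by rw [mul_comm]
  have h1 : ‖∑ x ∈ X, ∑ y ∈ Y, ψ (x * y)‖ ^ 2
      ≤ (X.card : ℝ) * ∑ x ∈ X, ‖∑ y ∈ Y, ψ (y * x)‖ ^ 2 := by
    calc ‖∑ x ∈ X, ∑ y ∈ Y, ψ (x * y)‖ ^ 2
        ≤ (∑ x ∈ X, ‖∑ y ∈ Y, ψ (y * x)‖) ^ 2 := by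
          apply pow_le_pow_left₀ (norm_nonneg _)
          rw [hSrw]
          exact norm_sum_le _ _
      _ ≤ (X.card : ℝ) * ∑ x ∈ X, ‖∑ y ∈ Y, ψ (y * x)‖ ^ 2 := by
          simpa using sq_sum_le_card_mul_sum_sq
            (s := X) (f := fun x => ‖∑ y ∈ Y, ψ (y * x)‖)
  -- Cauchy–Schwarz no. 2
  have h3 : (∑ w ∈ Y ×ˢ Y, ‖∑ x ∈ X, ψ (x * (w.1 - w.2))‖) ^ 2
      ≤ (Y.card : ℝ) ^ 2 * ∑ d : F, (rep X d : ℝ) * ‖∑ y ∈ Y, ψ (y * d)‖ ^ 2 := by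
    calc (∑ w ∈ Y ×ˢ Y, ‖∑ x ∈ X, ψ (x * (w.1 - w.2))‖) ^ 2
        ≤ ((Y ×ˢ Y).card : ℝ)
            * ∑ w ∈ Y ×ˢ Y, ‖∑ x ∈ X, ψ (x * (w.1 - w.2))‖ ^ 2 := by
          simpa using sq_sum_le_card_mul_sum_sq
            (s := Y ×ˢ Y) (f := fun w => ‖∑ x ∈ X, ψ (x * (w.1 - w.2))‖)
      _ = (Y.card : ℝ) ^ 2 * ∑ d : F, (rep X d : ℝ) * ‖∑ y ∈ Y, ψ (y * d)‖ ^ 2 := by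
          rw [hswap, hfib, Finset.card_product]
          push_cast
          ring
  -- assemble
  set a : ℝ := ‖∑ x ∈ X, ∑ y ∈ Y, ψ (x * y)‖ with ha
  set A2 : ℝ := ∑ w ∈ Y ×ˢ Y, ‖∑ x ∈ X, ψ (x * (w.1 - w.2))‖ with hA2
  set W : ℝ := ∑ d : F, (rep X d : ℝ) * ‖∑ y ∈ Y, ψ (y * d)‖ ^ 2 with hW
  have h12 : a ^ 2 ≤ (X.card : ℝ) * A2 :=
    le_trans h1 (mul_le_mul_of_nonneg_left hA1le (Nat.cast_nonneg _))
  calc a ^ 8 = (a ^ 2) ^ 4 := by ring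
    _ ≤ ((X.card : ℝ) * A2) ^ 4 := pow_le_pow_left₀ (sq_nonneg a) h12 4
    _ = (X.card : ℝ) ^ 4 * (A2 ^ 2) ^ 2 := by ring
    _ ≤ (X.card : ℝ) ^ 4 * ((Y.card : ℝ) ^ 2 * W) ^ 2 := by
        exact mul_le_mul_of_nonneg_left (pow_le_pow_left₀ (sq_nonneg A2) h3 2) (by positivity)
    _ = (X.card : ℝ) ^ 4 * (Y.card : ℝ) ^ 4 * W ^ 2 := by ring
    _ ≤ (X.card : ℝ) ^ 4 * (Y.card : ℝ) ^ 4
          * ((_root_.addEnergy X : ℝ) * ((Fintype.card F : ℝ) * (_root_.addEnergy Y : ℝ))) :=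
        mul_le_mul_of_nonneg_left hCS3 (by positivity)
    _ = (Fintype.card F : ℝ) * (X.card : ℝ) ^ 4 * (Y.card : ℝ) ^ 4 *
        (_root_.addEnergy X : ℝ) * (_root_.addEnergy Y : ℝ) := by ring
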